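/- (7/8)·ζ(3)·∏_{p ≡ 5,7 mod 8} (p³ − 1)/(p³ + 1) = 3π³/(64√2). -/

import Mathlib

open Complex Real

noncomputable def χ : DirichletCharacter ℂ 8 := (ZMod.χ₈').ringHomComp (Int.castRingHom ℂ)

noncomputable def gg : Nat.Primes → ℂ := fun p => ((p : ℂ) ^ 3 - 1) / ((p : ℂ) ^ 3 + 1)

def S2 : Set Nat.Primes := {p | (p : ℕ) % 8 = 5 ∨ (p : ℕ) % 8 = 7}

lemma hp_ge (p : Nat.Primes) : 2 ≤ (p : ℕ) := p.2.two_le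

lemma cube_ge (p : Nat.Primes) : 8 ≤ (p : ℕ) ^ 3 := by
  calc (8:ℕ) = 2^3 := rfl
  _ ≤ (p:ℕ)^3 := Nat.pow_le_pow_left (hp_ge p) 3

lemma cast_cube_add_one (p : Nat.Primes) : (p : ℂ) ^ 3 + 1 = (((p:ℕ)^3 + 1 : ℕ) : ℂ) := by
  push_cast; ring

lemma cast_cube_sub_one (p : Nat.Primes) : (p : ℂ) ^ 3 - 1 = (((p:ℕ)^3 - 1 : ℕ) : ℂ) := by
  push_cast [Nat.cast_sub (by have := cube_ge p; omega : 1 ≤ (p:ℕ)^3)]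
  ring

lemma cube_add_one_ne (p : Nat.Primes) : (p : ℂ) ^ 3 + 1 ≠ 0 := by
  rw [cast_cube_add_one]
  exact Nat.cast_ne_zero.mpr (Nat.succ_ne_zero _)

lemma cube_sub_one_ne (p : Nat.Primes) : (p : ℂ) ^ 3 - 1 ≠ 0 := by
  rw [cast_cube_sub_one]
  exact Nat.cast_ne_zero.mpr (by have := cube_ge p; omega)

lemma cube_ne (p : Nat.Primes) : (p : ℂ) ^ 3 ≠ 0 := by
  exact pow_ne_zero 3 (Nat.cast_ne_zero.mpr (by have := hp_ge p; omega))

lemma gg_eq (p : Nat.Primes) : gg p = 1 + (-2 / ((p : ℂ) ^ 3 + 1)) := by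
  rw [gg]
  field_simp [cube_add_one_ne p]
  ring

lemma gg_ne (p : Nat.Primes) : gg p ≠ 0 :=
  div_ne_zero (cube_sub_one_ne p) (cube_add_one_ne p)

lemma hgm : Multipliable (fun q : S2 => gg q.1) := by
  have hlog : Summable (fun q : S2 => Complex.log (gg q.1)) := by
    have hb : Summable (fun q : S2 => 3 / ((q.1 : ℕ) : ℝ) ^ 3) := by
      have h0 : Summable (fun n : ℕ => 3 * (1 / (n : ℝ) ^ 3)) :=
        (Real.summable_one_div_nat_pow.mpr (by norm_num : 1 < 3)).mul_left 3
      have hinj : Function.Injective (fun q : S2 => (q.1 : ℕ)) := by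
        intro a b h
        exact Subtype.ext (Subtype.ext h)
      exact (h0.comp_injective hinj).congr (fun q => by simp only [Function.comp_apply, mul_one_div])
    apply Summable.of_norm_bounded hb
    intro q
    obtain ⟨p, hp⟩ := q
    have h8 : 8 ≤ (p:ℕ)^3 := cube_ge p
    have hnorm : ‖(-2 : ℂ) / ((p : ℂ) ^ 3 + 1)‖ = 2 / (((p:ℕ):ℝ)^3 + 1) := by
      rw [norm_div, cast_cube_add_one, Complex.norm_natCast, norm_neg]
      push_cast
      norm_num
    have hle : ‖(-2 : ℂ) / ((p : ℂ) ^ 3 + 1)‖ ≤ 1/2 := by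
      rw [hnorm]
      rw [div_le_iff₀ (by positivity)]
      have : (8:ℝ) ≤ ((p:ℕ):ℝ)^3 := by exact_mod_cast h8
      linarith
    simp only [gg_eq p]
    calc ‖Complex.log (1 + (-2 / ((p : ℂ) ^ 3 + 1)))‖
        ≤ 3/2 * ‖(-2 : ℂ) / ((p : ℂ) ^ 3 + 1)‖ := Complex.norm_log_one_add_half_le_self hle
      _ ≤ 3 / ((p:ℕ):ℝ)^3 := by
          rw [hnorm, show (3:ℝ)/2 * (2/(((p:ℕ):ℝ)^3+1)) = 3/(((p:ℕ):ℝ)^3+1) from by ring]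
          have hp0 : (0:ℝ) < ((p:ℕ):ℝ) := by
            have := hp_ge p; exact_mod_cast (by omega : 0 < (p:ℕ))
          have h2 : (0:ℝ) < ((p:ℕ):ℝ)^3 := by positivity
          gcongr
          linarith
  exact Complex.multipliable_of_summable_log hlog

lemma zfac_eq (p : Nat.Primes) : (1 - ((p:ℕ):ℂ) ^ (-3:ℂ))⁻¹ = 1 + 1 / ((p : ℂ) ^ 3 - 1) := by
  have hcp : ((p:ℕ):ℂ) ^ (-3:ℂ) = (((p:ℕ):ℂ)^3)⁻¹ := by
    rw [show (-3:ℂ) = -((3:ℕ):ℂ) by norm_num, cpow_neg, cpow_natCast]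
  rw [hcp]
  have h2 := cube_sub_one_ne p
  have h3 := cube_ne p
  rw [show (1:ℂ) - (((p:ℕ):ℂ)^3)⁻¹ = (((p:ℕ):ℂ)^3 - 1) / ((p:ℕ):ℂ)^3 by rw [sub_div, div_self h3, one_div], inv_div]
  field_simp
  ring

lemma hzm (s : Set Nat.Primes) :
    Multipliable ((fun p : Nat.Primes => (1 - ((p:ℕ):ℂ) ^ (-3:ℂ))⁻¹) ∘ ((↑) : s → Nat.Primes)) := by
  have hne : ∀ p : Nat.Primes, (1 - ((p:ℕ):ℂ) ^ (-3:ℂ))⁻¹ ≠ 0 := by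
    intro p
    rw [zfac_eq p]
    have he : 1 + 1/((p:ℂ)^3 - 1) = (p:ℂ)^3/((p:ℂ)^3 - 1) := by
      field_simp [cube_sub_one_ne p]
      ring
    rw [he]
    exact div_ne_zero (cube_ne p) (cube_sub_one_ne p)
  have hlog : Summable (fun q : s => Complex.log ((1 - ((q.1:ℕ):ℂ) ^ (-3:ℂ))⁻¹)) := by
    have hb : Summable (fun q : s => 3 / ((q.1 : ℕ) : ℝ) ^ 3) := by
      have h0 : Summable (fun n : ℕ => 3 * (1 / (n : ℝ) ^ 3)) :=
        (Real.summable_one_div_nat_pow.mpr (by norm_num : 1 < 3)).mul_left 3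
      have hinj : Function.Injective (fun q : s => (q.1 : ℕ)) := by
        intro a b h
        exact Subtype.ext (Subtype.ext h)
      exact (h0.comp_injective hinj).congr (fun q => by simp only [Function.comp_apply, mul_one_div])
    apply Summable.of_norm_bounded hb
    intro q
    obtain ⟨p, hp⟩ := q
    have h8 : 8 ≤ (p:ℕ)^3 := cube_ge p
    have h8' : (8:ℝ) ≤ ((p:ℕ):ℝ)^3 := by exact_mod_cast h8
    have hnorm : ‖(1:ℂ) / ((p : ℂ) ^ 3 - 1)‖ = 1 / (((p:ℕ):ℝ)^3 - 1) := by
      rw [norm_div, cast_cube_sub_one, Complex.norm_natCast, norm_one]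
      congr 1
      push_cast [Nat.cast_sub (by omega : 1 ≤ (p:ℕ)^3)]
      ring
    have hle : ‖(1:ℂ) / ((p : ℂ) ^ 3 - 1)‖ ≤ 1/2 := by
      rw [hnorm, div_le_div_iff₀ (by linarith) (by norm_num)]
      linarith
    simp only [zfac_eq p]
    calc ‖Complex.log (1 + 1 / ((p : ℂ) ^ 3 - 1))‖
        ≤ 3/2 * ‖(1:ℂ) / ((p : ℂ) ^ 3 - 1)‖ := Complex.norm_log_one_add_half_le_self hle
      _ ≤ 3 / ((p:ℕ):ℝ)^3 := by
          rw [hnorm]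
          have hp0 : (0:ℝ) < ((p:ℕ):ℝ)^3 := by linarith
          rw [show (3:ℝ)/2 * (1/(((p:ℕ):ℝ)^3-1)) = (3/2)/(((p:ℕ):ℝ)^3-1) from by ring,
            div_le_div_iff₀ (by linarith) hp0]
          nlinarith
  exact Complex.multipliable_of_summable_log
    (f := (fun p : Nat.Primes => (1 - ((p:ℕ):ℂ) ^ (-3:ℂ))⁻¹) ∘ ((↑) : s → Nat.Primes)) hlog


lemma sinA (n : ℕ) : Real.sin (2*π*n*(1/8)) + Real.sin (2*π*n*(3/8)) =
    Real.sqrt 2 * ((ZMod.χ₈' n : ℤ) : ℝ) := by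
  have h8 : (n : ℝ) = (n % 8 : ℕ) + (n / 8 : ℕ) * 8 := by
    exact_mod_cast (Nat.mod_add_div' n 8).symm
  have e1 : Real.sin (2*π*n*(1/8)) = Real.sin (2*π*(n % 8 : ℕ)*(1/8)) := by
    rw [h8]
    have : 2*π*((n % 8 : ℕ) + (n / 8 : ℕ) * 8)*(1/8) = 2*π*(n % 8 : ℕ)*(1/8) + (n/8 : ℕ) * (2*π) := by ring
    rw [this, Real.sin_add_nat_mul_two_pi]
  have e2 : Real.sin (2*π*n*(3/8)) = Real.sin (2*π*(n % 8 : ℕ)*(3/8)) := by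
    rw [h8]
    have : 2*π*((n % 8 : ℕ) + (n / 8 : ℕ) * 8)*(3/8) = 2*π*(n % 8 : ℕ)*(3/8) + ((3*(n/8) : ℕ) : ℝ) * (2*π) := by
      push_cast; ring
    rw [this, Real.sin_add_nat_mul_two_pi]
  rw [e1, e2, ZMod.χ₈'_nat_eq_if_mod_eight]
  have h2 : n % 2 = n % 8 % 2 := (Nat.mod_mod_of_dvd n (by norm_num)).symm
  have hlt : n % 8 < 8 := Nat.mod_lt n (by norm_num)
  have s14 : Real.sin (π/4) = Real.sqrt 2 / 2 := Real.sin_pi_div_four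
  have s34 : Real.sin (3*π/4) = Real.sqrt 2 / 2 := by
    rw [show 3*π/4 = π - π/4 by ring, Real.sin_pi_sub, s14]
  have s54 : Real.sin (5*π/4) = -(Real.sqrt 2 / 2) := by
    rw [show 5*π/4 = π/4 + π by ring, Real.sin_add_pi, s14]
  have s74 : Real.sin (7*π/4) = -(Real.sqrt 2 / 2) := by
    rw [show 7*π/4 = 3*π/4 + π by ring, Real.sin_add_pi, s34]
  have s94 : Real.sin (9*π/4) = Real.sqrt 2 / 2 := by
    rw [show 9*π/4 = π/4 + (1:ℕ) * (2*π) by push_cast; ring, Real.sin_add_nat_mul_two_pi, s14]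
  have s154 : Real.sin (15*π/4) = -(Real.sqrt 2 / 2) := by
    rw [show 15*π/4 = 7*π/4 + (1:ℕ) * (2*π) by push_cast; ring, Real.sin_add_nat_mul_two_pi, s74]
  have s214 : Real.sin (21*π/4) = -(Real.sqrt 2 / 2) := by
    rw [show 21*π/4 = 5*π/4 + (2:ℕ) * (2*π) by push_cast; ring, Real.sin_add_nat_mul_two_pi, s54]
  have s32 : Real.sin (3*π/2) = -1 := by
    rw [show 3*π/2 = π/2 + π by ring, Real.sin_add_pi, Real.sin_pi_div_two]
  have s92 : Real.sin (9*π/2) = 1 := by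
    rw [show 9*π/2 = π/2 + (2:ℕ)*(2*π) by push_cast; ring, Real.sin_add_nat_mul_two_pi,
      Real.sin_pi_div_two]
  have s3pi : Real.sin (3*π) = 0 := by
    rw [show 3*π = π + (1:ℕ)*(2*π) by push_cast; ring, Real.sin_add_nat_mul_two_pi, Real.sin_pi]
  interval_cases h : n % 8 <;> simp only [h2, h]
  · rw [show 2*π*((0:ℕ):ℝ)*(1/8) = 0 by push_cast; ring, show 2*π*((0:ℕ):ℝ)*(3/8) = 0 by push_cast; ring]
    norm_num
    try ring
  · rw [show 2*π*((1:ℕ):ℝ)*(1/8) = π/4 by push_cast; ring, show 2*π*((1:ℕ):ℝ)*(3/8) = 3*π/4 by push_cast; ring, s14, s34]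
    norm_num
    try ring
  · rw [show 2*π*((2:ℕ):ℝ)*(1/8) = π/2 by push_cast; ring, show 2*π*((2:ℕ):ℝ)*(3/8) = 3*π/2 by push_cast; ring, Real.sin_pi_div_two, s32]
    norm_num
    try ring
  · rw [show 2*π*((3:ℕ):ℝ)*(1/8) = 3*π/4 by push_cast; ring, show 2*π*((3:ℕ):ℝ)*(3/8) = 9*π/4 by push_cast; ring, s34, s94]
    norm_num
    try ring
  · rw [show 2*π*((4:ℕ):ℝ)*(1/8) = π by push_cast; ring, show 2*π*((4:ℕ):ℝ)*(3/8) = 3*π by push_cast; ring, Real.sin_pi, s3pi]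
    norm_num
    try ring
  · rw [show 2*π*((5:ℕ):ℝ)*(1/8) = 5*π/4 by push_cast; ring, show 2*π*((5:ℕ):ℝ)*(3/8) = 15*π/4 by push_cast; ring, s54, s154]
    norm_num
    try ring
  · rw [show 2*π*((6:ℕ):ℝ)*(1/8) = 3*π/2 by push_cast; ring, show 2*π*((6:ℕ):ℝ)*(3/8) = 9*π/2 by push_cast; ring, s32, s92]
    norm_num
    try ring
  · rw [show 2*π*((7:ℕ):ℝ)*(1/8) = 7*π/4 by push_cast; ring, show 2*π*((7:ℕ):ℝ)*(3/8) = 21*π/4 by push_cast; ring, s74, s214]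
    norm_num
    try ring

lemma bern2 : bernoulli 2 = 1/6 := by
  rw [show (2:ℕ) = 1+1 from rfl, bernoulli]; norm_num [bernoulli'_two]
lemma bern3 : bernoulli 3 = 0 := by
  rw [show (3:ℕ) = 2+1 from rfl, bernoulli]; norm_num [bernoulli'_three]

lemma Lval : LSeries (fun n : ℕ => χ n) 3 = ((3*π^3/(64*Real.sqrt 2) : ℝ) : ℂ) := by
  have h1 := hasSum_one_div_nat_pow_mul_sin (k := 1) one_ne_zero (x := 1/8)
    ⟨by norm_num, by norm_num⟩
  have h2 := hasSum_one_div_nat_pow_mul_sin (k := 1) one_ne_zero (x := 3/8)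
    ⟨by norm_num, by norm_num⟩
  have e1 : (Polynomial.map (algebraMap ℚ ℝ) (Polynomial.bernoulli (2*1+1))).eval (1/8 : ℝ)
      = 21/512 := by
    simp [Polynomial.bernoulli, Finset.sum_range_succ, bernoulli_one, bern2, bern3]; norm_num
  have e2 : (Polynomial.map (algebraMap ℚ ℝ) (Polynomial.bernoulli (2*1+1))).eval (3/8 : ℝ)
      = 15/512 := by
    simp [Polynomial.bernoulli, Finset.sum_range_succ, bernoulli_one, bern2, bern3]; norm_num
  rw [e1] at h1; rw [e2] at h2
  have h3 := (h1.add h2).mul_left ((Real.sqrt 2)⁻¹)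
  have h4 := (Complex.hasSum_ofReal (f := fun n : ℕ =>
      (Real.sqrt 2)⁻¹ * (1 / (n:ℝ) ^ (2*1+1) * Real.sin (2*π*n*(1/8)) +
        1 / (n:ℝ) ^ (2*1+1) * Real.sin (2*π*n*(3/8))))).mpr h3
  have key : ∀ n : ℕ, (((Real.sqrt 2)⁻¹ * (1 / (n:ℝ) ^ (2*1+1) * Real.sin (2*π*n*(1/8)) +
        1 / (n:ℝ) ^ (2*1+1) * Real.sin (2*π*n*(3/8))) : ℝ) : ℂ)
      = LSeries.term (fun n : ℕ => χ n) 3 n := by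
    intro n
    rcases eq_or_ne n 0 with rfl | hn
    · simp [LSeries.term]
    · rw [LSeries.term_of_ne_zero hn]
      rw [← mul_add, sinA n]
      have hχ : χ (n : ZMod 8) = ((ZMod.χ₈' n : ℤ) : ℂ) := by
        simp [χ, MulChar.ringHomComp_apply]
      rw [hχ, show (3 : ℂ) = ((3:ℕ) : ℂ) by norm_num, cpow_natCast]
      have hs2 : (Real.sqrt 2 : ℝ) ≠ 0 := by positivity
      push_cast
      field_simp
  rw [funext key] at h4
  rw [LSeries]
  rw [h4.tsum_eq]
  congr 1
  have hπ := Real.pi_pos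
  have h2 : (0:ℝ) < Real.sqrt 2 := by positivity
  norm_num [Nat.factorial]
  field_simp
  ring

set_option maxHeartbeats 2000000 in
theorem stmt12 :
    (7 / 8) * riemannZeta 3 *
        ∏' p : {p : ℕ // p.Prime ∧ (p % 8 = 5 ∨ p % 8 = 7)},
          ((p.1 : ℂ) ^ 3 - 1) / ((p.1 : ℂ) ^ 3 + 1) =
      ((3 * π ^ 3 / (64 * Real.sqrt 2) : ℝ) : ℂ) := by
  have hF := DirichletCharacter.LSeries_eulerProduct_hasProd χ (s := 3) (by norm_num)
  have hZ := riemannZeta_eulerProduct_hasProd (s := 3) (by norm_num)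
  have hcpow : ∀ p : Nat.Primes, ((p:ℕ):ℂ) ^ (-3:ℂ) = (((p:ℕ):ℂ)^3)⁻¹ := fun p => by
    rw [show (-3:ℂ) = -((3:ℕ):ℂ) by norm_num, cpow_neg, cpow_natCast]
  -- χ values
  have hmod2 : ∀ p : Nat.Primes, (p:ℕ) ≠ 2 → (p:ℕ) % 2 = 1 :=
    fun p hp => Nat.odd_iff.mp (p.2.odd_of_ne_two hp)
  have hm8 : ∀ p : Nat.Primes, (p:ℕ) % 2 = (p:ℕ) % 8 % 2 :=
    fun p => (Nat.mod_mod_of_dvd _ (by norm_num)).symm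
  have hχeq : ∀ n : ℕ, χ (n : ZMod 8) = ((ZMod.χ₈' n : ℤ) : ℂ) := fun n => by
    simp [χ, MulChar.ringHomComp_apply]
  -- pointwise on S2
  have hFS : HasProd ((fun p : Nat.Primes => (1 - χ ((p:ℕ) : ZMod 8) * ((p:ℕ):ℂ) ^ (-3:ℂ))⁻¹) ∘ ((↑) : S2 → Nat.Primes))
      ((∏' q : S2, (1 - ((q.1:ℕ):ℂ) ^ (-3:ℂ))⁻¹) * (∏' q : S2, gg q.1)) := by
    have hZS := (hzm S2).hasProd
    have hmul := hZS.mul hgm.hasProd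
    have hfun : ((fun p : Nat.Primes => (1 - χ ((p:ℕ) : ZMod 8) * ((p:ℕ):ℂ) ^ (-3:ℂ))⁻¹) ∘ ((↑) : S2 → Nat.Primes))
        = fun q : S2 => ((fun p : Nat.Primes => (1 - ((p:ℕ):ℂ) ^ (-3:ℂ))⁻¹) ∘ Subtype.val) q * gg q.1 := by
      funext q
      obtain ⟨p, hp⟩ := q
      have hχm1 : χ ((p:ℕ) : ZMod 8) = -1 := by
        rw [hχeq, ZMod.χ₈'_nat_eq_if_mod_eight]
        have h2 : (p:ℕ) % 2 = 1 := by
          rw [hm8]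
          rcases hp with h | h <;> rw [h]
        rcases hp with h | h <;> norm_num [h, h2]
      simp only [Function.comp]
      rw [hχm1, hcpow p, gg]
      have h1 := cube_add_one_ne p
      have h2 := cube_sub_one_ne p
      have h3 := cube_ne p
      rw [show (1:ℂ) - -1 * (((p:ℕ):ℂ)^3)⁻¹ = (((p:ℕ):ℂ)^3 + 1) / ((p:ℕ):ℂ)^3 by rw [add_div, div_self h3]; ring,
        show (1:ℂ) - (((p:ℕ):ℂ)^3)⁻¹ = (((p:ℕ):ℂ)^3 - 1) / ((p:ℕ):ℂ)^3 by rw [sub_div, div_self h3, one_div], inv_div, inv_div]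
      field_simp
    rw [hfun]
    exact hmul
  -- pointwise on S2ᶜ
  have hFC : HasProd ((fun p : Nat.Primes => (1 - χ ((p:ℕ) : ZMod 8) * ((p:ℕ):ℂ) ^ (-3:ℂ))⁻¹) ∘ ((↑) : (S2ᶜ : Set Nat.Primes) → Nat.Primes))
      ((∏' q : (S2ᶜ : Set Nat.Primes), (1 - ((q.1:ℕ):ℂ) ^ (-3:ℂ))⁻¹) * (7/8)) := by
    have hZC := (hzm (S2ᶜ)).hasProd
    have h2mem : (⟨2, Nat.prime_two⟩ : Nat.Primes) ∈ (S2ᶜ : Set Nat.Primes) := by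
      intro h
      rcases h with h | h <;> norm_num [S2] at h
    have he : HasProd (fun q : (S2ᶜ : Set Nat.Primes) =>
        (if (q.1:ℕ) = 2 then (7/8 : ℂ) else 1)) (7/8) := by
      have := hasProd_single (f := fun q : (S2ᶜ : Set Nat.Primes) =>
          (if (q.1:ℕ) = 2 then (7/8 : ℂ) else 1)) (⟨⟨2, Nat.prime_two⟩, h2mem⟩ : (S2ᶜ : Set Nat.Primes)) ?_
      · simpa using this
      · intro q hq
        have : (q.1:ℕ) ≠ 2 := by
          intro h
          exact hq (Subtype.ext (Subtype.ext h))
        simp [this]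
    have hmul := hZC.mul he
    have hfun : ((fun p : Nat.Primes => (1 - χ ((p:ℕ) : ZMod 8) * ((p:ℕ):ℂ) ^ (-3:ℂ))⁻¹) ∘ ((↑) : (S2ᶜ : Set Nat.Primes) → Nat.Primes))
        = fun q : (S2ᶜ : Set Nat.Primes) =>
          ((fun p : Nat.Primes => (1 - ((p:ℕ):ℂ) ^ (-3:ℂ))⁻¹) ∘ Subtype.val) q *
            (if (q.1:ℕ) = 2 then (7/8 : ℂ) else 1) := by
      funext q
      obtain ⟨p, hp⟩ := q
      simp only [Function.comp]
      rcases eq_or_ne (p:ℕ) 2 with h2 | h2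
      · have hχ0 : χ ((p:ℕ) : ZMod 8) = 0 := by
          rw [hχeq, ZMod.χ₈'_nat_eq_if_mod_eight, h2]
          norm_num
        rw [hχ0, hcpow p, h2]
        norm_num
      · have hmm : (p:ℕ) % 8 = 1 ∨ (p:ℕ) % 8 = 3 := by
          have ho := hmod2 p h2
          have h8 := hm8 p
          have hn : ¬((p:ℕ) % 8 = 5 ∨ (p:ℕ) % 8 = 7) := hp
          omega
        have hχ1 : χ ((p:ℕ) : ZMod 8) = 1 := by
          rw [hχeq, ZMod.χ₈'_nat_eq_if_mod_eight]
          have ho := hmod2 p h2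
          norm_num [ho, hmm]
        rw [hχ1, h2 |> fun h => if_neg h]
        norm_num
    rw [hfun]
    exact hmul
  have htotF := hFS.mul_compl hFC
  have hLeq : LSeries (fun n : ℕ => χ n) 3
      = (∏' q : S2, (1 - ((q.1:ℕ):ℂ) ^ (-3:ℂ))⁻¹) * (∏' q : S2, gg q.1) *
        ((∏' q : (S2ᶜ : Set Nat.Primes), (1 - ((q.1:ℕ):ℂ) ^ (-3:ℂ))⁻¹) * (7/8)) :=
    hF.unique htotF
  have hZeq : riemannZeta 3
      = (∏' q : S2, (1 - ((q.1:ℕ):ℂ) ^ (-3:ℂ))⁻¹) *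
        (∏' q : (S2ᶜ : Set Nat.Primes), (1 - ((q.1:ℕ):ℂ) ^ (-3:ℂ))⁻¹) :=
    hZ.unique ((hzm S2).hasProd.mul_compl (hzm (S2ᶜ)).hasProd)
  have hPP : (∏' p : {p : ℕ // p.Prime ∧ (p % 8 = 5 ∨ p % 8 = 7)},
      ((p.1 : ℂ) ^ 3 - 1) / ((p.1 : ℂ) ^ 3 + 1)) = ∏' q : S2, gg q.1 := by
    exact Equiv.tprod_eq (⟨fun p => ⟨⟨p.1, p.2.1⟩, p.2.2⟩, fun q => ⟨q.1.1, q.1.2, q.2⟩,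
      fun _ => rfl, fun _ => rfl⟩ : {p : ℕ // p.Prime ∧ (p % 8 = 5 ∨ p % 8 = 7)} ≃ S2)
      (fun q : S2 => gg q.1)
  rw [hPP, hZeq, ← Lval]
  rw [hLeq]
  ring
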